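/- Let h : [-1,1] → ℝ be twice continuously differentiable with h(-1) = h(1) = 0. Then sup_{x ∈ [-1,1]} |h(x)| ≤ (4√2/3) · (∫_{-1}^{1} h''(t)² dt)^{1/2}. -/

import Mathlib

open MeasureTheory intervalIntegral Set

/-- Cauchy–Schwarz inequality for interval integrals of continuous functions. -/
lemma cs_interval {f : ℝ → ℝ} (hf : Continuous f) {a b : ℝ} (hab : a ≤ b) :
    (∫ t in a..b, f t) ^ 2 ≤ (b - a) * ∫ t in a..b, f t ^ 2 := by
  set c := ∫ t in a..b, f t with hc
  have hif : IntervalIntegrable f volume a b := hf.intervalIntegrable a b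
  have hif2 : IntervalIntegrable (fun t => f t ^ 2) volume a b :=
    (hf.pow 2).intervalIntegrable a b
  have key : (0:ℝ) ≤ ∫ t in a..b, ((b - a) * f t - c) ^ 2 :=
    intervalIntegral.integral_nonneg hab (fun t _ => sq_nonneg _)
  have expand : ∫ t in a..b, ((b - a) * f t - c) ^ 2
      = (b - a) ^ 2 * (∫ t in a..b, f t ^ 2) - (b - a) * c ^ 2 := by
    have e : (fun t => ((b - a) * f t - c) ^ 2)
        = fun t => ((b - a) ^ 2 * f t ^ 2 - (2 * (b - a) * c) * f t) + c ^ 2 := by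
      funext t; ring
    rw [e, intervalIntegral.integral_add ((hif2.const_mul _).sub (hif.const_mul _))
        intervalIntegrable_const,
      intervalIntegral.integral_sub (hif2.const_mul _) (hif.const_mul _),
      intervalIntegral.integral_const_mul, intervalIntegral.integral_const_mul,
      intervalIntegral.integral_const, ← hc, smul_eq_mul]
    ring
  rw [expand] at key
  rcases eq_or_lt_of_le hab with rfl | hlt
  · simp [hc]
  · nlinarith [key, sub_pos.mpr hlt]

/-- Antiderivative of `√(t - c)` (extended by `0` to the left of `c`). -/
lemma hasDerivAt_sqrtAnti (c s : ℝ) :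
    HasDerivAt (fun t => (2/3) * ((t - c) * Real.sqrt (t - c))) (Real.sqrt (s - c)) s := by
  rcases lt_trichotomy s c with hlt | rfl | hgt
  · -- s < c : function is locally constant 0
    have hz : Real.sqrt (s - c) = 0 := Real.sqrt_eq_zero'.mpr (by linarith)
    rw [hz]
    have hev : (fun t => (2/3 : ℝ) * ((t - c) * Real.sqrt (t - c))) =ᶠ[nhds s]
        fun _ => (0:ℝ) := by
      filter_upwards [eventually_lt_nhds hlt] with t ht
      rw [Real.sqrt_eq_zero'.mpr (by linarith)]; ring
    exact (hasDerivAt_const s (0:ℝ)).congr_of_eventuallyEq hev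
  · -- s = c
    rw [sub_self, Real.sqrt_zero, hasDerivAt_iff_tendsto_slope]
    have heq : ∀ t ≠ s, slope (fun t => (2/3 : ℝ) * ((t - s) * Real.sqrt (t - s))) s t
        = (2/3) * Real.sqrt (t - s) := by
      intro t ht
      have hts : t - s ≠ 0 := sub_ne_zero.mpr ht
      rw [slope_def_field]
      field_simp [div_eq_iff hts]
      ring
    have hcont : Filter.Tendsto (fun t => (2/3 : ℝ) * Real.sqrt (t - s))
        (nhdsWithin s {s}ᶜ) (nhds 0) := by
      have : Continuous fun t => (2/3 : ℝ) * Real.sqrt (t - s) :=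
        continuous_const.mul (Real.continuous_sqrt.comp (continuous_id.sub continuous_const))
      have h0 : (2/3 : ℝ) * Real.sqrt (s - s) = 0 := by simp
      simpa [h0] using (this.tendsto s).mono_left nhdsWithin_le_nhds
    refine hcont.congr' ?_
    filter_upwards [self_mem_nhdsWithin] with t ht
    exact (heq t ht).symm
  · -- s > c
    have hpos : 0 < s - c := sub_pos.mpr hgt
    have hs : HasDerivAt (fun t => Real.sqrt (t - c)) (1 / (2 * Real.sqrt (s - c))) s := by
      simpa using ((hasDerivAt_id s).sub_const c).sqrt hpos.ne'
    have hprod : HasDerivAt (fun t => (t - c) * Real.sqrt (t - c))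
        (1 * Real.sqrt (s - c) + (s - c) * (1 / (2 * Real.sqrt (s - c)))) s :=
      ((hasDerivAt_id s).sub_const c).mul hs
    have := hprod.const_mul (2/3 : ℝ)
    refine this.congr_deriv ?_
    have hsq : Real.sqrt (s - c) * Real.sqrt (s - c) = s - c :=
      Real.mul_self_sqrt hpos.le
    have hsp : (0:ℝ) < Real.sqrt (s - c) := Real.sqrt_pos.mpr hpos
    field_simp
    nlinarith [hsq]

/-- Antiderivative of `√(c - t)` (extended by `0` to the right of `c`). -/
lemma hasDerivAt_sqrtAnti' (c s : ℝ) :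
    HasDerivAt (fun t => -((2/3 : ℝ) * ((c - t) * Real.sqrt (c - t)))) (Real.sqrt (c - s)) s := by
  have h1 : HasDerivAt (fun t : ℝ => -t) (-1 : ℝ) s := (hasDerivAt_id s).neg
  have h3 := ((hasDerivAt_sqrtAnti (-c) (-s)).comp s h1).neg
  have hE : ∀ t : ℝ, -t - -c = c - t := fun t => by ring
  simp only [Function.comp_def, hE] at h3
  simpa [Pi.neg_def] using h3

/-- Hinged embedding bound: for `h` twice continuously differentiable with
`h(±1) = 0`, one has `‖h‖_{L^∞(-1,1)} ≤ (4√2/3) ‖h''‖_{L²(-1,1)}`. -/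
theorem stmt_4 (h : ℝ → ℝ) (hreg : ContDiff ℝ 2 h)
    (hb1 : h (-1) = 0) (hb2 : h 1 = 0) :
    ∀ x ∈ Set.Icc (-1 : ℝ) 1,
      |h x| ≤ (4 * Real.sqrt 2 / 3) *
        Real.sqrt (∫ t in (-1 : ℝ)..1, (deriv (deriv h) t) ^ 2) := by
  intro x hx
  obtain ⟨hx1, hx2⟩ := hx
  -- regularity facts
  have hreg' : ContDiff ℝ (1 + 1 : ℕ) h := by exact_mod_cast hreg
  have hsplit := (contDiff_succ_iff_deriv (n := 1)).mp (by exact_mod_cast hreg')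
  have hd1 : Differentiable ℝ h := hsplit.1
  have hreg1 : ContDiff ℝ 1 (deriv h) := hsplit.2.2
  have hsplit2 := (contDiff_succ_iff_deriv (n := 0)).mp (by exact_mod_cast hreg1)
  have hd2 : Differentiable ℝ (deriv h) := hsplit2.1
  have hc2 : Continuous (deriv (deriv h)) := hsplit2.2.2.continuous
  set f := deriv (deriv h) with hf
  set I := ∫ t in (-1:ℝ)..1, f t ^ 2 with hI
  have hInn : 0 ≤ I :=
    intervalIntegral.integral_nonneg (by norm_num) fun t _ => sq_nonneg _
  have hIf2 : IntervalIntegrable (fun t => f t ^ 2) volume (-1) 1 :=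
    (hc2.pow 2).intervalIntegrable _ _
  -- Rolle
  obtain ⟨c, hcmem, hc0⟩ := exists_deriv_eq_zero (show (-1:ℝ) < 1 by norm_num)
    hd1.continuous.continuousOn (hb1.trans hb2.symm)
  have hc1 : (-1:ℝ) ≤ c := hcmem.1.le
  have hc1' : c ≤ 1 := hcmem.2.le
  -- majorant
  set φ : ℝ → ℝ := fun s => Real.sqrt (s - c) + Real.sqrt (c - s) with hφ
  have hφcont : Continuous φ := by
    exact (Real.continuous_sqrt.comp (continuous_id.sub continuous_const)).add
      (Real.continuous_sqrt.comp (continuous_const.sub continuous_id))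
  have hφnn : ∀ s, 0 ≤ φ s := fun s => add_nonneg (Real.sqrt_nonneg _) (Real.sqrt_nonneg _)
  -- Step A : pointwise bound on deriv h
  have hA : ∀ s ∈ Icc (-1:ℝ) 1, |deriv h s| ≤ φ s * Real.sqrt I := by
    intro s hs
    have ftc : ∫ t in c..s, f t = deriv h s - deriv h c :=
      integral_deriv_eq_sub (fun t _ => hd2 t) (hc2.intervalIntegrable _ _)
    have habs : |deriv h s| = |∫ t in c..s, f t| := by rw [ftc, hc0, sub_zero]
    rcases le_total c s with hcs | hsc
    · have hsub : ∫ t in c..s, f t ^ 2 ≤ I :=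
        intervalIntegral.integral_mono_interval hc1 hcs hs.2
          (Filter.Eventually.of_forall fun t => sq_nonneg _) hIf2
      have hcs2 : (∫ t in c..s, f t) ^ 2 ≤ (s - c) * I := by
        calc (∫ t in c..s, f t) ^ 2 ≤ (s - c) * ∫ t in c..s, f t ^ 2 :=
              cs_interval hc2 hcs
          _ ≤ (s - c) * I := by
              exact mul_le_mul_of_nonneg_left hsub (by linarith)
      have := Real.abs_le_sqrt hcs2
      rw [habs]
      calc |∫ t in c..s, f t| ≤ Real.sqrt ((s - c) * I) := this
        _ = Real.sqrt (s - c) * Real.sqrt I := Real.sqrt_mul (by linarith) _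
        _ ≤ φ s * Real.sqrt I := by
            apply mul_le_mul_of_nonneg_right _ (Real.sqrt_nonneg _)
            simp [hφ]
    · have hsub : ∫ t in s..c, f t ^ 2 ≤ I :=
        intervalIntegral.integral_mono_interval hs.1 hsc hc1'
          (Filter.Eventually.of_forall fun t => sq_nonneg _) hIf2
      have hcs2 : (∫ t in s..c, f t) ^ 2 ≤ (c - s) * I := by
        calc (∫ t in s..c, f t) ^ 2 ≤ (c - s) * ∫ t in s..c, f t ^ 2 :=
              cs_interval hc2 hsc
          _ ≤ (c - s) * I := mul_le_mul_of_nonneg_left hsub (by linarith)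
      have hsym : |∫ t in c..s, f t| = |∫ t in s..c, f t| := by
        rw [intervalIntegral.integral_symm, abs_neg]
      rw [habs, hsym]
      calc |∫ t in s..c, f t| ≤ Real.sqrt ((c - s) * I) := Real.abs_le_sqrt hcs2
        _ = Real.sqrt (c - s) * Real.sqrt I := Real.sqrt_mul (by linarith) _
        _ ≤ φ s * Real.sqrt I := by
            apply mul_le_mul_of_nonneg_right _ (Real.sqrt_nonneg _)
            simp [hφ]
  -- integrability of pieces
  have hφI : ∀ a b : ℝ, IntervalIntegrable (fun s => φ s * Real.sqrt I) volume a b :=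
    fun a b => (hφcont.mul continuous_const).intervalIntegrable a b
  -- Step B : integrate
  have ftc2 : ∫ s in (-1:ℝ)..x, deriv h s = h x - h (-1) :=
    integral_deriv_eq_sub (fun t _ => hd1 t) (hd2.continuous.intervalIntegrable _ _)
  have hx1' : (-1:ℝ) ≤ x := hx1
  have step1 : |h x| ≤ ∫ s in (-1:ℝ)..x, |deriv h s| := by
    have : h x = ∫ s in (-1:ℝ)..x, deriv h s := by rw [ftc2, hb1, sub_zero]
    rw [this]
    exact intervalIntegral.abs_integral_le_integral_abs hx1'
  have step2 : ∫ s in (-1:ℝ)..x, |deriv h s| ≤ ∫ s in (-1:ℝ)..x, φ s * Real.sqrt I := by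
    apply intervalIntegral.integral_mono_on hx1'
      ((hd2.continuous.abs).intervalIntegrable _ _) (hφI _ _)
    intro s hs
    exact hA s ⟨hs.1, hs.2.trans hx2⟩
  have step3 : ∫ s in (-1:ℝ)..x, φ s * Real.sqrt I ≤ ∫ s in (-1:ℝ)..1, φ s * Real.sqrt I := by
    apply intervalIntegral.integral_mono_interval le_rfl hx1' hx2
      (Filter.Eventually.of_forall fun s => mul_nonneg (hφnn s) (Real.sqrt_nonneg _)) (hφI _ _)
  -- compute the φ integral
  have int1 : ∫ s in (-1:ℝ)..1, Real.sqrt (s - c) = (2/3) * ((1 - c) * Real.sqrt (1 - c)) := by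
    have := integral_eq_sub_of_hasDerivAt (f := fun t => (2/3 : ℝ) * ((t - c) * Real.sqrt (t - c)))
      (f' := fun s => Real.sqrt (s - c)) (a := (-1:ℝ)) (b := 1)
      (fun s _ => hasDerivAt_sqrtAnti c s)
      ((Real.continuous_sqrt.comp (continuous_id.sub continuous_const)).intervalIntegrable _ _)
    rw [this]
    have hz : Real.sqrt (-1 - c) = 0 := Real.sqrt_eq_zero'.mpr (by linarith)
    simp only [hz]
    ring
  have int2 : ∫ s in (-1:ℝ)..1, Real.sqrt (c - s) = (2/3) * ((c + 1) * Real.sqrt (c + 1)) := by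
    have := integral_eq_sub_of_hasDerivAt
      (f := fun t => -((2/3 : ℝ) * ((c - t) * Real.sqrt (c - t))))
      (f' := fun s => Real.sqrt (c - s)) (a := (-1:ℝ)) (b := 1)
      (fun s _ => hasDerivAt_sqrtAnti' c s)
      ((Real.continuous_sqrt.comp (continuous_const.sub continuous_id)).intervalIntegrable _ _)
    rw [this]
    have hz : Real.sqrt (c - 1) = 0 := Real.sqrt_eq_zero'.mpr (by linarith)
    have he : c - (-1:ℝ) = c + 1 := by ring
    simp only [hz, he]
    ring
  have intφ : ∫ s in (-1:ℝ)..1, φ s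
      = (2/3) * ((1 - c) * Real.sqrt (1 - c)) + (2/3) * ((c + 1) * Real.sqrt (c + 1)) := by
    have hca : Continuous fun s : ℝ => Real.sqrt (s - c) :=
      Real.continuous_sqrt.comp (continuous_id.sub continuous_const)
    have hcb : Continuous fun s : ℝ => Real.sqrt (c - s) :=
      Real.continuous_sqrt.comp (continuous_const.sub continuous_id)
    rw [hφ]
    rw [intervalIntegral.integral_add (hca.intervalIntegrable _ _)
      (hcb.intervalIntegrable _ _), int1, int2]
  have intφ_bound : ∫ s in (-1:ℝ)..1, φ s ≤ 4 * Real.sqrt 2 / 3 := by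
    rw [intφ]
    have hs1 : Real.sqrt (1 - c) ≤ Real.sqrt 2 := Real.sqrt_le_sqrt (by linarith)
    have hs2 : Real.sqrt (c + 1) ≤ Real.sqrt 2 := Real.sqrt_le_sqrt (by linarith)
    have hn1 : (0:ℝ) ≤ 1 - c := by linarith
    have hn2 : (0:ℝ) ≤ c + 1 := by linarith
    nlinarith [mul_le_mul_of_nonneg_left hs1 hn1, mul_le_mul_of_nonneg_left hs2 hn2]
  have step4 : ∫ s in (-1:ℝ)..1, φ s * Real.sqrt I
      ≤ (4 * Real.sqrt 2 / 3) * Real.sqrt I := by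
    rw [intervalIntegral.integral_mul_const]
    exact mul_le_mul_of_nonneg_right intφ_bound (Real.sqrt_nonneg _)
  calc |h x| ≤ ∫ s in (-1:ℝ)..x, |deriv h s| := step1
    _ ≤ ∫ s in (-1:ℝ)..x, φ s * Real.sqrt I := step2
    _ ≤ ∫ s in (-1:ℝ)..1, φ s * Real.sqrt I := step3
    _ ≤ (4 * Real.sqrt 2 / 3) * Real.sqrt I := step4
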